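/- arXiv:0910.3500 — 2 statements merged into one kernel-verified Lean document; each statement's English description precedes it below -/
import Mathlib

section
/- Let (E_s) be a scale of Banach spaces, u a 1-bounded morphism with constant N = N¹_s(u) on the scale up to s, and suppose 3N < s. Then for every λ ∈ (0, 1 − 3N/s) and every x ∈ E_s, the series ∑_{j≥0} u^j(x)/j! converges in E_{λs} and |∑_{j≥0} u^j(x)/j!|_{λs} ≤ (1 − 3N/((1−λ)s))^{−1} |x|_s. -/
theorem pow_fact_aux (j : ℕ) : (j : ℝ) ^ j ≤ 3 ^ j * j.factorial := by
  have hterm : (j : ℝ) ^ j / j.factorial ≤ ∑ i ∈ Finset.range (j + 1), (j : ℝ) ^ i / i.factorial :=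
    Finset.single_le_sum (f := fun i => (j : ℝ) ^ i / i.factorial)
      (fun i _ => by positivity) (Finset.self_mem_range_succ j)
  have hexp : (j : ℝ) ^ j / j.factorial ≤ Real.exp j :=
    hterm.trans (Real.sum_le_exp_of_nonneg (by positivity) (j + 1))
  have h3 : Real.exp (j : ℝ) ≤ 3 ^ j := by
    rw [← Real.exp_one_pow]
    exact pow_le_pow_left₀ (Real.exp_pos 1).le (by linarith [Real.exp_one_lt_d9]) j
  have hf : (0 : ℝ) < j.factorial := by positivity
  rw [div_le_iff₀ hf] at hexp
  nlinarith [hexp, h3, hf]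


/-- Convergence of the exponential series of a `1`-bounded morphism `u` with constant
`N` on a scale of Banach spaces, under the condition `3N < s`: the exponential series
applied to `x ∈ E_s` converges (normwise) in `E_{λs}` with the stated bound, using
that `u^j` is `j`-bounded with constant `3^j j! N^j`. -/
theorem stmt_11 {V : Type*} [AddCommGroup V] [Module ℝ V]
    (p : ℝ → V → ℝ) (s : ℝ) (hs : 0 < s)
    (hmono : ∀ t t' : ℝ, ∀ x : V, 0 < t → t ≤ t' → t' ≤ s → p t x ≤ p t' x)
    (hp : ∀ t : ℝ, ∀ x : V, 0 < t → 0 ≤ p t x)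
    (u : Module.End ℝ V) (N : ℝ) (hN : 0 < N)
    (hu : ∀ t σ : ℝ, ∀ x : V, 0 < t → 0 < σ → t + σ ≤ s →
      p t (u x) ≤ N / σ * p (t + σ) x)
    (hNs : 3 * N < s) :
    ∀ lam : ℝ, 0 < lam → lam < 1 - 3 * N / s → ∀ x : V,
      Summable (fun j : ℕ => (j.factorial : ℝ)⁻¹ * p (lam * s) ((u ^ j) x)) ∧
      ∑' j : ℕ, (j.factorial : ℝ)⁻¹ * p (lam * s) ((u ^ j) x) ≤
        (1 - 3 * N / ((1 - lam) * s))⁻¹ * p s x := by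
  intro lam hlam hlam' x
  have h3Ns : (0 : ℝ) < 3 * N / s := by positivity
  have hlam1 : lam < 1 := by linarith
  have hσ : 0 < (1 - lam) * s := by nlinarith
  have h3Nσ : 3 * N < (1 - lam) * s := by
    have h : 3 * N / s < 1 - lam := by linarith
    calc 3 * N = 3 * N / s * s := by field_simp
    _ < (1 - lam) * s := by nlinarith
  set σ := (1 - lam) * s with hσdef
  set r := 3 * N / σ with hrdef
  have hr0 : 0 ≤ r := by positivity
  have hr1 : r < 1 := (div_lt_one hσ).mpr h3Nσ
  -- iterate bound
  have key : ∀ j : ℕ, ∀ t δ : ℝ, 0 < t → 0 < δ → t + j * δ ≤ s → ∀ y : V,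
      p t ((u ^ j) y) ≤ (N / δ) ^ j * p (t + j * δ) y := by
    intro j
    induction j with
    | zero => intro t δ ht hδ hts y; simp
    | succ j ih =>
      intro t δ ht hδ hts y
      have hjs : t + (j : ℝ) * δ ≤ s := by push_cast at hts ⊢; nlinarith
      have hcast : t + ((j : ℕ) + 1 : ℕ) * δ = t + (j : ℝ) * δ + δ := by push_cast; ring
      calc p t ((u ^ (j + 1)) y) = p t ((u ^ j) (u y)) := by
            rw [pow_succ, Module.End.mul_apply]
        _ ≤ (N / δ) ^ j * p (t + j * δ) (u y) := ih t δ ht hδ hjs (u y)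
        _ ≤ (N / δ) ^ j * (N / δ * p (t + j * δ + δ) y) := by
            apply mul_le_mul_of_nonneg_left _ (by positivity)
            exact hu (t + j * δ) δ y (by positivity) hδ (by push_cast at hts ⊢; linarith)
        _ = (N / δ) ^ (j + 1) * p (t + j * δ + δ) y := by rw [pow_succ]; ring
        _ = (N / δ) ^ (j + 1) * p (t + ((j : ℕ) + 1 : ℕ) * δ) y := by rw [hcast]
  have hlams : 0 < lam * s := by positivity
  have hbound : ∀ j : ℕ, (j.factorial : ℝ)⁻¹ * p (lam * s) ((u ^ j) x) ≤ r ^ j * p s x := by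
    intro j
    rcases Nat.eq_zero_or_pos j with hj | hj
    · subst hj
      simpa using hmono (lam * s) s x hlams (by nlinarith) le_rfl
    · have hjR : (0 : ℝ) < j := by exact_mod_cast hj
      have hδ : 0 < σ / j := by positivity
      have hsum : lam * s + (j : ℝ) * (σ / j) = s := by
        field_simp
        ring
      have h1 : p (lam * s) ((u ^ j) x) ≤ (N / (σ / j)) ^ j * p s x := by
        have := key j (lam * s) (σ / j) hlams hδ (by rw [hsum]) x
        rwa [hsum] at this
      have hcoef : (j.factorial : ℝ)⁻¹ * (N / (σ / j)) ^ j ≤ r ^ j := by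
        have hfact : (0 : ℝ) < j.factorial := by positivity
        have hjj : (j : ℝ) ^ j ≤ 3 ^ j * j.factorial := pow_fact_aux j
        have hrw : (N / (σ / j)) ^ j = (N / σ) ^ j * (j : ℝ) ^ j := by
          rw [div_div_eq_mul_div, div_pow, mul_pow]; ring
        have hrw2 : r ^ j = (N / σ) ^ j * 3 ^ j := by
          rw [hrdef]
          rw [div_pow, div_pow, mul_pow]
          ring
        rw [hrw, hrw2, ← mul_assoc]
        rw [inv_mul_eq_div, div_mul_eq_mul_div, div_le_iff₀ hfact] -- maybe
        calc (N / σ) ^ j * (j : ℝ) ^ j ≤ (N / σ) ^ j * (3 ^ j * j.factorial) := by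
              apply mul_le_mul_of_nonneg_left hjj (by positivity)
          _ = (N / σ) ^ j * 3 ^ j * j.factorial := by ring
      calc (j.factorial : ℝ)⁻¹ * p (lam * s) ((u ^ j) x)
          ≤ (j.factorial : ℝ)⁻¹ * ((N / (σ / j)) ^ j * p s x) := by
            apply mul_le_mul_of_nonneg_left h1 (by positivity)
        _ = (j.factorial : ℝ)⁻¹ * (N / (σ / j)) ^ j * p s x := by ring
        _ ≤ r ^ j * p s x := mul_le_mul_of_nonneg_right hcoef (hp s x hs)
  have hps : 0 ≤ p s x := hp s x hs
  have hgeo : Summable (fun j : ℕ => r ^ j * p s x) :=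
    (summable_geometric_of_lt_one hr0 hr1).mul_right _
  have hnn : ∀ j : ℕ, 0 ≤ (j.factorial : ℝ)⁻¹ * p (lam * s) ((u ^ j) x) := fun j =>
    mul_nonneg (by positivity) (hp _ _ hlams)
  have hsum : Summable (fun j : ℕ => (j.factorial : ℝ)⁻¹ * p (lam * s) ((u ^ j) x)) :=
    Summable.of_nonneg_of_le hnn hbound hgeo
  refine ⟨hsum, ?_⟩
  calc ∑' j : ℕ, (j.factorial : ℝ)⁻¹ * p (lam * s) ((u ^ j) x)
      ≤ ∑' j : ℕ, r ^ j * p s x := Summable.tsum_le_tsum hbound hsum hgeo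
    _ = (1 - r)⁻¹ * p s x := by rw [tsum_mul_right, tsum_geometric_of_lt_one hr0 hr1]
    _ = (1 - 3 * N / ((1 - lam) * s))⁻¹ * p s x := by rw [hrdef, hσdef]
end

section
/- Let (E_s) be a scale of Banach spaces and u a 1-bounded morphism with constant N = N¹_τ(u). Suppose s ∈ (0,τ) and 3N/(τ−s) ≤ 1/2, and assume the action is scaled at a ∈ E with constant C, i.e. |uⁿ·a|_s ≤ C σ^{−n} Nⁿ_{s+σ}(uⁿ) where Nⁿ(uⁿ) ≤ 3ⁿ n! Nⁿ. Then |(e^{−u}(Id+u) − Id)·a|_s ≤ 36 C N² / (τ−s)². -/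
/-!
Expanding `e^{-u}(Id + u) - Id`, the `n`-th coefficient `(n+1)/(n+2)!` cancels the factorial in
the scaling bound `|uⁿ⁺²·a|_s ≤ C (τ-s)^{-(n+2)} 3ⁿ⁺² (n+2)! Nⁿ⁺²` (taken with `σ = τ - s`),
so the series is dominated by `C x² ∑ (n+1) xⁿ = C x² / (1-x)²` with `x = 3N/(τ-s)`; for
`x ≤ 1/2` this is at most `4 C x² = 36 C N²/(τ-s)²`.
-/

open Nat

theorem hasSum_succ_mul_geometric {𝕜 : Type*} [NormedDivisionRing 𝕜] [HasSummableGeomSeries 𝕜]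
    {x : 𝕜} (hx : ‖x‖ < 1) : HasSum (fun n : ℕ => ((n : 𝕜) + 1) * x ^ n) (1 / (1 - x) ^ 2) := by
  simpa using hasSum_choose_mul_geometric_of_norm_lt_one 1 hx

theorem one_div_one_sub_sq_le_four {x : ℝ} (hx : x ≤ 1 / 2) : 1 / (1 - x) ^ 2 ≤ 4 := by
  rw [div_le_iff₀ (by nlinarith)]
  nlinarith

theorem summable_and_tsum_le_of_le_succ_mul_geometric {f : ℕ → ℝ} {C x : ℝ} (hC : 0 ≤ C)
    (hx₀ : 0 ≤ x) (hx : x ≤ 1 / 2) (hf₀ : ∀ n, 0 ≤ f n)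
    (hf : ∀ n, f n ≤ C * (((n : ℝ) + 1) * x ^ (n + 2))) :
    Summable f ∧ ∑' n, f n ≤ 4 * C * x ^ 2 := by
  have hg : HasSum (fun n : ℕ => C * x ^ 2 * (((n : ℝ) + 1) * x ^ n))
      (C * x ^ 2 * (1 / (1 - x) ^ 2)) :=
    (hasSum_succ_mul_geometric (𝕜 := ℝ) (by rw [Real.norm_of_nonneg hx₀]; linarith)).mul_left _
  have hle : ∀ n, f n ≤ C * x ^ 2 * (((n : ℝ) + 1) * x ^ n) := fun n =>
    (hf n).trans_eq (by ring)
  have hsum : Summable f := hg.summable.of_nonneg_of_le hf₀ hle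
  refine ⟨hsum, ?_⟩
  calc ∑' n, f n ≤ C * x ^ 2 * (1 / (1 - x) ^ 2) := hasSum_le hle hsum.hasSum hg
    _ ≤ C * x ^ 2 * 4 := by gcongr; exact one_div_one_sub_sq_le_four hx
    _ = 4 * C * x ^ 2 := by ring

/-- Quadratic-error estimate in the Kolmogorov iteration: if the action of the
`1`-bounded morphism `u` (with constant `N`) is scaled at `a` with constant `C`, i.e.
`|uⁿ·a|_s ≤ C σ⁻ⁿ Nⁿ(uⁿ)` with `Nⁿ(uⁿ) ≤ 3ⁿ n! Nⁿ`, and `3N/(τ-s) ≤ 1/2`, then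
`|(e^{-u}(Id + u) - Id)·a|_s = |∑ (-1)^{n+1} (n+1)/(n+2)! uⁿ⁺²·a|_s ≤ 36 C N²/(τ-s)²`. -/
theorem stmt_12 {V : Type*} [AddCommGroup V] [Module ℝ V]
    (p : ℝ → V → ℝ) (τ s : ℝ) (hs : 0 < s) (hsτ : s < τ)
    (hp : ∀ t : ℝ, ∀ x : V, 0 < t → 0 ≤ p t x)
    (u : Module.End ℝ V) (N C : ℝ) (hN : 0 < N) (hC : 0 < C) (a : V)
    (hscaled : ∀ n : ℕ, 1 ≤ n → ∀ σ : ℝ, 0 < σ → σ ≤ τ - s →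
      p s ((u ^ n) a) ≤ C / σ ^ n * (3 ^ n * n.factorial * N ^ n))
    (hsmall : 3 * N / (τ - s) ≤ 1 / 2) :
    Summable (fun n : ℕ => ((n : ℝ) + 1) / ((n + 2).factorial : ℝ) * p s ((u ^ (n + 2)) a)) ∧
    ∑' n : ℕ, ((n : ℝ) + 1) / ((n + 2).factorial : ℝ) * p s ((u ^ (n + 2)) a) ≤
      36 * C * N ^ 2 / (τ - s) ^ 2 := by
  have hσ : 0 < τ - s := sub_pos.mpr hsτ
  have hterm : ∀ n : ℕ, ((n : ℝ) + 1) / ((n + 2)! : ℝ) * p s ((u ^ (n + 2)) a) ≤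
      C * (((n : ℝ) + 1) * (3 * N / (τ - s)) ^ (n + 2)) := fun n =>
    calc _ ≤ ((n : ℝ) + 1) / ((n + 2)! : ℝ) *
          (C / (τ - s) ^ (n + 2) * (3 ^ (n + 2) * (n + 2)! * N ^ (n + 2))) := by
          gcongr
          exact hscaled (n + 2) (by omega) (τ - s) hσ le_rfl
      _ = _ := by rw [div_pow, mul_pow]; field_simp
  obtain ⟨hsum, hle⟩ := summable_and_tsum_le_of_le_succ_mul_geometric hC.le (by positivity)
    hsmall (fun n => by have := hp s ((u ^ (n + 2)) a) hs; positivity) hterm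
  refine ⟨hsum, hle.trans_eq ?_⟩
  field_simp
  ring
end
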